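/- Let X and M be geodesic metric spaces, x ∈ X, p ∈ M, δ₀ > 0, and 0 < η ≤ δ₀/2100. Let f : X → M and g : M → X be maps of distortion at most η with f(x) = p, g(p) = x, and d(g(f(z)), z) ≤ η for all z ∈ X. Assume that every loop in M whose image is contained in some open ball of radius δ₀/30 is null-homotopic in M, and that every loop in X whose image is contained in some open ball of radius δ₀/30 is null-homotopic in X. Let Ψ : π₁(X, x) → π₁(M, p) be the map characterized by Ψ([σ]) = [σ'] whenever σ' is a loop at p with d(σ'(t), f(σ(t))) ≤ δ₀/300 for all t, and let Φ : π₁(M, p) → π₁(X, x) be the map characterized by Φ([c]) = [c'] whenever c' is a loop at x with d(c'(t), g(c(t))) ≤ δ₀/300 for all t. Then Φ ∘ Ψ is the identity map of π₁(X, x). -/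

import Mathlib

open Set unitInterval

attribute [local instance] Path.Homotopic.setoid

/-- A metric space is geodesic if every pair of points is joined by a unit-speed
continuous path defined on `[0, dist p q]`. -/
def IsGeodesicSpace (M : Type*) [MetricSpace M] : Prop :=
  ∀ p q : M, ∃ γ : ℝ → M,
    ContinuousOn γ (Set.Icc 0 (dist p q)) ∧
    γ 0 = p ∧ γ (dist p q) = q ∧
    ∀ s ∈ Set.Icc 0 (dist p q), ∀ t ∈ Set.Icc 0 (dist p q),
      dist (γ s) (γ t) = |s - t|

/-- A map between metric spaces has distortion at most `η`. -/
def DistortionLE {X M : Type*} [MetricSpace X] [MetricSpace M]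
    (f : X → M) (η : ℝ) : Prop :=
  ∀ a b : X, |dist (f a) (f b) - dist a b| ≤ η

/-- Two loops are freely homotopic. -/
def FreelyHomotopic {Z : Type*} [TopologicalSpace Z]
    (c₀ c₁ : C(unitInterval, Z)) : Prop :=
  ∃ H : C(unitInterval × unitInterval, Z),
    (∀ t, H (t, 0) = c₀ t) ∧ (∀ t, H (t, 1) = c₁ t) ∧ (∀ s, H (0, s) = H (1, s))

/-- A loop is null-homotopic if it is freely homotopic to a constant loop. -/
def NullHomotopicLoop {Z : Type*} [TopologicalSpace Z]
    (c : C(unitInterval, Z)) : Prop :=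
  ∃ z : Z, FreelyHomotopic c (ContinuousMap.const unitInterval z)

/-- The class of a loop based at `z` in the fundamental group `π₁(Z, z)`. -/
noncomputable def loopClass {Z : Type*} [TopologicalSpace Z] {z : Z} (c : Path z z) :
    FundamentalGroup Z z :=
  FundamentalGroup.fromPath (X := TopCat.of Z) ⟦c⟧


private lemma contOn_union {α β : Type*} [TopologicalSpace α] [TopologicalSpace β]
    {f : α → β} {s t : Set α} (hsc : IsClosed s) (htc : IsClosed t)
    (hs : ContinuousOn f s) (ht : ContinuousOn f t) : ContinuousOn f (s ∪ t) := by
  intro y hy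
  rw [continuousWithinAt_union]
  constructor
  · by_cases h : y ∈ s
    · exact hs y h
    · exact continuousWithinAt_of_notMem_closure (by rwa [hsc.closure_eq])
  · by_cases h : y ∈ t
    · exact ht y h
    · exact continuousWithinAt_of_notMem_closure (by rwa [htc.closure_eq])

private lemma exists_approx_path {X M : Type*} [MetricSpace X] [MetricSpace M]
    (hM : IsGeodesicSpace M) (f : X → M) (η : ℝ) (hη : 0 < η) (hf : DistortionLE f η)
    {x : X} (c : Path x x) :
    ∃ c' : Path (f x) (f x), ∀ t : unitInterval, dist (c' t) (f (c t)) ≤ 4 * η := by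
  -- uniform continuity of the path
  have hUC : UniformContinuous (c : unitInterval → X) :=
    CompactSpace.uniformContinuous_of_continuous c.continuous
  rw [Metric.uniformContinuous_iff] at hUC
  obtain ⟨δ, hδpos, hδ⟩ := hUC η hη
  have hext : ∀ s t : ℝ, |s - t| < δ → dist (c.extend s) (c.extend t) < η := by
    intro s t hst
    apply hδ
    have h1 : dist (Set.projIcc (0:ℝ) 1 zero_le_one s) (Set.projIcc (0:ℝ) 1 zero_le_one t)
        ≤ dist s t := by
      simpa using (LipschitzWith.projIcc (zero_le_one (α := ℝ))).dist_le_mul s t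
    calc dist (Set.projIcc (0:ℝ) 1 zero_le_one s) (Set.projIcc (0:ℝ) 1 zero_le_one t)
        ≤ dist s t := h1
      _ < δ := by rwa [Real.dist_eq]
  obtain ⟨n, hn⟩ := exists_nat_one_div_lt hδpos
  set N : ℕ := n + 1 with hNdef
  have hNpos : (0:ℝ) < N := by positivity
  have hNδ : 1 / (N:ℝ) < δ := by rw [hNdef]; push_cast; exact hn
  set u : ℕ → X := fun i => c.extend (i / N) with hu
  choose γ hγc hγ0 hγ1 hγd using fun i : ℕ => hM (f (u i)) (f (u (i + 1)))
  set d : ℕ → ℝ := fun i => dist (f (u i)) (f (u (i + 1))) with hd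
  have hd0 : ∀ i, 0 ≤ d i := fun _ => dist_nonneg
  have hub : ∀ i : ℕ, d i ≤ 2 * η := by
    intro i
    have h1 : dist (u i) (u (i+1)) < η := by
      apply hext
      have e : (i:ℝ)/N - (((i:ℕ)+1 : ℕ):ℝ)/N = -(1/N) := by push_cast; field_simp; ring
      rw [e, abs_neg, abs_of_nonneg (by positivity)]
      exact hNδ
    have h2 := abs_le.1 (hf (u i) (u (i+1)))
    have e2 : d i = dist (f (u i)) (f (u (i+1))) := rfl
    rw [e2]; linarith [h2.2]
  set idx : ℝ → ℕ := fun t => min ⌊(N:ℝ) * t⌋₊ n with hidx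
  set F : ℝ → M := fun t => γ (idx t) (d (idx t) * ((N:ℝ) * t - idx t)) with hF
  -- basic index facts
  have hidxle : ∀ t : ℝ, 0 ≤ t → (idx t : ℝ) ≤ (N:ℝ) * t := by
    intro t ht
    calc (idx t : ℝ) ≤ (⌊(N:ℝ) * t⌋₊ : ℝ) := Nat.cast_le.2 (min_le_left _ _)
      _ ≤ (N:ℝ) * t := Nat.floor_le (by positivity)
  have hidxge : ∀ t : ℝ, t ≤ 1 → (N:ℝ) * t ≤ (idx t : ℝ) + 1 := by
    intro t ht
    by_cases h : ⌊(N:ℝ) * t⌋₊ ≤ n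
    · have e : idx t = ⌊(N:ℝ) * t⌋₊ := min_eq_left h
      rw [e]
      exact (Nat.lt_floor_add_one _).le
    · have e : idx t = n := min_eq_right (not_le.mp h).le
      rw [e]
      have : (N:ℝ) * t ≤ N := by nlinarith
      rw [hNdef] at this ⊢
      push_cast at this ⊢
      linarith
  have hidxn : ∀ t : ℝ, idx t ≤ n := fun t => min_le_right _ _
  -- the parameter lies in the geodesic's domain
  have hmem : ∀ t : ℝ, 0 ≤ t → t ≤ 1 →
      d (idx t) * ((N:ℝ) * t - idx t) ∈ Icc 0 (d (idx t)) := by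
    intro t ht0 ht1
    constructor
    · exact mul_nonneg (hd0 _) (by linarith [hidxle t ht0])
    · exact mul_le_of_le_one_right (hd0 _) (by linarith [hidxge t ht1])
  -- pointwise estimate
  have hest : ∀ t : ℝ, 0 ≤ t → t ≤ 1 → dist (F t) (f (c.extend t)) ≤ 4 * η := by
    intro t ht0 ht1
    have harg := hmem t ht0 ht1
    have e1 : dist (F t) (f (u (idx t))) ≤ 2 * η := by
      have h0 : (0:ℝ) ∈ Icc 0 (d (idx t)) := ⟨le_refl _, hd0 _⟩
      have := hγd (idx t) _ harg 0 h0
      rw [hγ0 (idx t)] at this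
      rw [hF]
      simp only []
      rw [this, sub_zero, abs_of_nonneg harg.1]
      linarith [harg.2, hub (idx t)]
    have e2 : dist (f (u (idx t))) (f (c.extend t)) ≤ 2 * η := by
      have hclose : dist (u (idx t)) (c.extend t) < η := by
        apply hext
        have ha := hidxle t ht0
        have hb := hidxge t ht1
        have h1 : (idx t : ℝ)/N ≤ t := by
          rw [div_le_iff₀ hNpos, mul_comm]; exact ha
        have h2 : t ≤ ((idx t : ℝ) + 1)/N := by
          rw [le_div_iff₀ hNpos, mul_comm]; exact hb
        have e : ((idx t : ℝ) + 1)/N = (idx t : ℝ)/N + 1/N := add_div _ _ _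
        have hN0 : (0:ℝ) ≤ 1/N := by positivity
        refine lt_of_le_of_lt (abs_le.2 ⟨?_, ?_⟩) hNδ
        · rw [e] at h2; linarith
        · linarith
      have h2 := abs_le.1 (hf (u (idx t)) (c.extend t))
      linarith [h2.2]
    calc dist (F t) (f (c.extend t))
        ≤ dist (F t) (f (u (idx t))) + dist (f (u (idx t))) (f (c.extend t)) :=
          dist_triangle _ _ _
      _ ≤ 4 * η := by linarith
  -- continuity on each segment
  have hsegcont : ∀ i : ℕ, i ≤ n → ContinuousOn F (Icc ((i:ℝ)/N) (((i:ℝ)+1)/N)) := by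
    intro i hi
    have hEq : EqOn F (fun t => γ i (d i * ((N:ℝ) * t - i))) (Icc ((i:ℝ)/N) (((i:ℝ)+1)/N)) := by
      intro t ht
      have hNt0 : (i:ℝ) ≤ (N:ℝ) * t := by
        have h := ht.1; rw [div_le_iff₀ hNpos, mul_comm] at h; exact h
      have hNt1 : (N:ℝ) * t ≤ (i:ℝ) + 1 := by
        have h := ht.2; rw [le_div_iff₀ hNpos, mul_comm] at h; exact h
      rcases lt_or_eq_of_le hNt1 with h | h
      · have hfl : ⌊(N:ℝ) * t⌋₊ = i := by
          rw [Nat.floor_eq_iff (by linarith [Nat.cast_nonneg (α := ℝ) i])]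
          exact ⟨hNt0, h⟩
        have hidxt : idx t = i := by rw [hidx]; simp only [hfl]; exact min_eq_left hi
        rw [hF]; simp only [hidxt]
      · -- right endpoint : N * t = i + 1
        by_cases hin : i < n
        · have hfl : ⌊(N:ℝ) * t⌋₊ = i + 1 := by
            rw [h]; exact_mod_cast Nat.floor_natCast (i+1)
          have hidxt : idx t = i + 1 := by
            rw [hidx]; simp only [hfl]; exact min_eq_left hin
          have hz : d (idx t) * ((N:ℝ) * t - (idx t)) = 0 := by
            rw [hidxt, h]; push_cast; ring
          have lhs : F t = f (u (i+1)) := by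
            rw [hF]; simp only []; rw [hz, hidxt, hγ0 (i+1)]
          have rhs : γ i (d i * ((N:ℝ) * t - i)) = f (u (i+1)) := by
            have : d i * ((N:ℝ) * t - i) = d i := by rw [h]; ring
            rw [this, hγ1 i]
          rw [lhs]; exact rhs.symm
        · have hii : i = n := le_antisymm hi (not_lt.mp hin)
          have hfl : ⌊(N:ℝ) * t⌋₊ = i + 1 := by
            rw [h]; exact_mod_cast Nat.floor_natCast (i+1)
          have hidxt : idx t = i := by
            rw [hidx]; simp only [hfl]; rw [hii]; exact min_eq_right (by omega)
          rw [hF]; simp only [hidxt]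
      -- note: both branches already closed
    apply ContinuousOn.congr _ hEq
    apply (hγc i).comp
    · exact (continuous_const.mul ((continuous_const.mul continuous_id).sub
        continuous_const)).continuousOn
    · intro t ht
      have hNt0 : (i:ℝ) ≤ (N:ℝ) * t := by
        have h := ht.1; rw [div_le_iff₀ hNpos, mul_comm] at h; exact h
      have hNt1 : (N:ℝ) * t ≤ (i:ℝ) + 1 := by
        have h := ht.2; rw [le_div_iff₀ hNpos, mul_comm] at h; exact h
      constructor
      · exact mul_nonneg (hd0 i) (by linarith)
      · exact mul_le_of_le_one_right (hd0 i) (by linarith)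
  -- glue
  have hglue : ∀ k : ℕ, k ≤ N → ContinuousOn F (Icc 0 ((k:ℝ)/N)) := by
    intro k
    induction k with
    | zero =>
      intro _
      simp only [Nat.cast_zero, zero_div, Icc_self]
      exact continuousOn_singleton _ _
    | succ m ih =>
      intro hk
      have h1 := ih (by omega)
      have h2 : ContinuousOn F (Icc ((m:ℝ)/N) (((m:ℝ)+1)/N)) := hsegcont m (by omega)
      have h3 := contOn_union isClosed_Icc isClosed_Icc h1 h2
      rw [Icc_union_Icc_eq_Icc (by positivity) (by gcongr; linarith)] at h3
      have e : ((m+1:ℕ):ℝ) = (m:ℝ) + 1 := by push_cast; ring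
      rw [e]
      exact h3
  have hFcont : ContinuousOn F (Icc (0:ℝ) 1) := by
    have := hglue N le_rfl
    rwa [div_self (ne_of_gt hNpos)] at this
  -- endpoints
  have hu0 : u 0 = x := by
    rw [hu]; simp only [Nat.cast_zero, zero_div]; exact c.extend_zero
  have huN : u N = x := by
    rw [hu]; simp only []
    rw [div_self (ne_of_gt hNpos)]
    exact c.extend_one
  have hF0 : F 0 = f x := by
    have hidx0 : idx 0 = 0 := by rw [hidx]; simp
    calc F 0 = γ (idx 0) (d (idx 0) * ((N:ℝ) * 0 - (idx 0 : ℕ))) := rfl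
      _ = γ 0 (d 0 * ((N:ℝ) * 0 - ((0:ℕ):ℝ))) := by rw [hidx0]
      _ = γ 0 0 := by norm_num
      _ = f (u 0) := hγ0 0
      _ = f x := by rw [hu0]
  have hF1 : F 1 = f x := by
    have hfl : ⌊(N:ℝ) * 1⌋₊ = N := by rw [mul_one]; exact Nat.floor_natCast N
    have hidx1 : idx 1 = n := by
      rw [hidx]; simp only [hfl]; exact min_eq_right (by omega)
    calc F 1 = γ (idx 1) (d (idx 1) * ((N:ℝ) * 1 - (idx 1 : ℕ))) := rfl
      _ = γ n (d n * ((N:ℝ) * 1 - (n:ℝ))) := by rw [hidx1]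
      _ = γ n (d n) := by
          congr 1
          rw [hNdef]; push_cast; ring
      _ = f (u (n+1)) := hγ1 n
      _ = f x := by rw [show n + 1 = N from rfl, huN]
  -- assemble the path
  refine ⟨⟨⟨fun t => F t, ?_⟩, ?_, ?_⟩, ?_⟩
  · exact hFcont.comp_continuous continuous_subtype_val (fun t => t.2)
  · exact hF0
  · exact hF1
  · intro t
    have := hest t t.2.1 t.2.2
    rwa [c.extend_extends' t] at this


/-- the composition of the backward map `Ψ : π₁(X,x) → π₁(M,p)` and the
forward map `Φ : π₁(M,p) → π₁(X,x)`, each characterized by sending a loop class to the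
class of any `δ₀/300`-close loop drawn across the approximations `f` and `g`
respectively, is the identity of `π₁(X, x)`. -/
theorem forward_comp_backward_eq_id {X M : Type*} [MetricSpace X] [MetricSpace M]
    (hX : IsGeodesicSpace X) (hM : IsGeodesicSpace M)
    (x : X) (p : M) (δ₀ η : ℝ) (hδ₀ : 0 < δ₀) (hη : 0 < η) (hηδ : η ≤ δ₀ / 2100)
    (f : X → M) (g : M → X) (hf : DistortionLE f η) (hg : DistortionLE g η)
    (hfx : f x = p) (hgp : g p = x)
    (hgf : ∀ z : X, dist (g (f z)) z ≤ η)
    (hcontractM : ∀ c : C(unitInterval, M), c 0 = c 1 →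
      (∃ z : M, Set.range c ⊆ Metric.ball z (δ₀ / 30)) → NullHomotopicLoop c)
    (hcontractX : ∀ c : C(unitInterval, X), c 0 = c 1 →
      (∃ z : X, Set.range c ⊆ Metric.ball z (δ₀ / 30)) → NullHomotopicLoop c)
    (Ψ : FundamentalGroup X x → FundamentalGroup M p)
    (hΨ : ∀ (c : Path x x) (c' : Path p p),
      (∀ t : unitInterval, dist (c' t) (f (c t)) ≤ δ₀ / 300) →
      Ψ (loopClass c) = loopClass c')
    (Φ : FundamentalGroup M p → FundamentalGroup X x)
    (hΦ : ∀ (c : Path p p) (c' : Path x x),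
      (∀ t : unitInterval, dist (c' t) (g (c t)) ≤ δ₀ / 300) →
      Φ (loopClass c) = loopClass c') :
    ∀ a : FundamentalGroup X x, Φ (Ψ a) = a := by
  intro a
  obtain ⟨c, hc⟩ := Quotient.exists_rep
    (show Path.Homotopic.Quotient x x from FundamentalGroup.toPath (X := TopCat.of X) a)
  obtain ⟨cP, hcP⟩ := exists_approx_path hM f η hη hf c
  set cPP : Path p p := cP.cast hfx.symm hfx.symm with hcPP
  have hcoe : ∀ t : unitInterval, cPP t = cP t := fun t => by
    rw [hcPP, Path.cast_coe]
  have h1 : ∀ t : unitInterval, dist (cPP t) (f (c t)) ≤ δ₀ / 300 := by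
    intro t
    rw [hcoe]
    linarith [hcP t]
  have h2 : ∀ t : unitInterval, dist (c t) (g (cPP t)) ≤ δ₀ / 300 := by
    intro t
    have t1 : dist (c t) (g (f (c t))) ≤ η := by rw [dist_comm]; exact hgf (c t)
    have t2 : dist (g (f (c t))) (g (cPP t)) ≤ dist (f (c t)) (cPP t) + η := by
      have := abs_le.1 (hg (f (c t)) (cPP t))
      linarith [this.2]
    have t3 : dist (f (c t)) (cPP t) ≤ 4 * η := by
      rw [dist_comm, hcoe]; exact hcP t
    calc dist (c t) (g (cPP t)) ≤ dist (c t) (g (f (c t))) + dist (g (f (c t))) (g (cPP t)) :=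
          dist_triangle _ _ _
      _ ≤ δ₀ / 300 := by linarith
  have ha : loopClass c = a := by
    refine Eq.trans (congrArg (FundamentalGroup.fromPath (X := TopCat.of X)) hc) ?_
    rfl
  rw [← ha, hΨ c cPP h1, hΦ cPP c h2]
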